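/- Let (g_n) be a sequence of isometries of an α-almost geodesic, δ-hyperbolic separable metric space (X,d). Let ξ ∈ ∂X and suppose there exist two distinct points ξ₁ ≠ ξ₂ ∈ ∂X such that for every neighbourhood U of ξ in the Gromov bordification there exists n₀ with g_nξ₁ ∈ U and g_nξ₂ ∈ U for all n ≥ n₀. Then for every o ∈ X, g_n o → ξ in the Gromov bordification. -/

import Mathlib

/-!
STATEMENT 19: Let (g_n) be a sequence of isometries of an α-almost geodesic,
δ-hyperbolic separable metric space (X,d).  Let ξ ∈ ∂X and suppose there are
two distinct boundary points ξ₁ ≠ ξ₂ such that for every neighbourhood U of ξ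
in the Gromov bordification, eventually g_n ξ₁ ∈ U and g_n ξ₂ ∈ U (i.e. the
extended Gromov products (ξ | g_n ξᵢ)_o tend to +∞).  Then for every o' ∈ X,
g_n o' → ξ in the Gromov bordification, i.e. (ξ | g_n o')_o → +∞.
-/

open Filter Set

namespace Stmt19

variable {X : Type*} [MetricSpace X]

/-- The Gromov product `(x|y)_o`. -/
noncomputable def gp (o x y : X) : ℝ := (dist x o + dist y o - dist x y) / 2

/-- `X` is `δ`-hyperbolic. -/
def IsGromovHyperbolicWith (X : Type*) [MetricSpace X] (δ : ℝ) : Prop :=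
  ∀ o x y z : X, min (gp o x z) (gp o z y) - δ ≤ gp o x y

/-- `X` is `α`-almost geodesic. -/
def IsAlmostGeodesicWith (X : Type*) [MetricSpace X] (α : ℝ) : Prop :=
  ∀ x y : X, ∀ t ∈ Icc (0 : ℝ) (dist x y), ∃ z : X,
    |dist x z - t| ≤ α ∧ |dist y z - (dist x y - t)| ≤ α

theorem gp_basechange (o o' x y : X) : gp o x y - dist o o' ≤ gp o' x y := by
  have h1 := dist_triangle x o' o
  have h2 := dist_triangle y o' o
  have h3 : dist o' o = dist o o' := dist_comm o' o
  unfold gp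
  linarith

/-- The sequence `u` converges at infinity. -/
def ConvAtInfinity (o : X) (u : ℕ → X) : Prop :=
  Tendsto (fun p : ℕ × ℕ => gp o (u p.1) (u p.2)) atTop atTop

/-- Sequences converging at infinity. -/
def BSeq (X : Type*) [MetricSpace X] (o : X) := {u : ℕ → X // ConvAtInfinity o u}

/-- Equivalence of sequences converging at infinity. -/
def bRel (o : X) (u v : BSeq X o) : Prop :=
  Tendsto (fun i => gp o (u.1 i) (v.1 i)) atTop atTop

/-- The Gromov boundary `∂X`. -/
def GromovBoundary (X : Type*) [MetricSpace X] (o : X) := Quot (bRel (X := X) o)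

section Isom

variable (e : X ≃ᵢ X) (o : X)

theorem gp_isom (x y : X) : gp o (e x) (e y) = gp (e.symm o) x y := by
  unfold gp
  have h1 : dist (e x) o = dist x (e.symm o) := by
    conv_lhs => rw [← e.apply_symm_apply o]
    rw [e.dist_eq]
  have h2 : dist (e y) o = dist y (e.symm o) := by
    conv_lhs => rw [← e.apply_symm_apply o]
    rw [e.dist_eq]
  rw [h1, h2, e.dist_eq]

theorem gp_isom_ge (x y : X) : gp o x y - dist o (e.symm o) ≤ gp o (e x) (e y) := by
  rw [gp_isom]
  exact gp_basechange o (e.symm o) x y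

theorem ConvAtInfinity.isom {o : X} {u : ℕ → X} (hu : ConvAtInfinity o u)
    (e : X ≃ᵢ X) : ConvAtInfinity o (fun i => e (u i)) := by
  refine tendsto_atTop_mono' _ ?_ (tendsto_atTop_add_const_right _ (-(dist o (e.symm o))) hu)
  filter_upwards with p
  have := gp_isom_ge e o (u p.1) (u p.2)
  simpa [sub_eq_add_neg] using this

theorem bRel.isom {o : X} {u v : BSeq X o} (h : bRel o u v) (e : X ≃ᵢ X) :
    bRel o ⟨fun i => e (u.1 i), u.2.isom e⟩ ⟨fun i => e (v.1 i), v.2.isom e⟩ := by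
  refine tendsto_atTop_mono' _ ?_ (tendsto_atTop_add_const_right _ (-(dist o (e.symm o))) h)
  filter_upwards with i
  have := gp_isom_ge e o (u.1 i) (v.1 i)
  simpa [sub_eq_add_neg] using this

/-- The induced action of an isometry of `X` on its Gromov boundary. -/
def bmap : GromovBoundary X o → GromovBoundary X o :=
  Quot.map (fun u => ⟨fun i => e (u.1 i), u.2.isom e⟩) (fun _ _ h => h.isom e)

end Isom

/-- The extended Gromov product of two boundary points,
`(ξ|η)_o = sup { liminf (uᵢ|vᵢ)_o : u ∈ ξ, v ∈ η }`. -/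
noncomputable def gpBB (o : X) (ξ η : GromovBoundary X o) : EReal :=
  ⨆ (u : {u : BSeq X o // Quot.mk _ u = ξ}) (v : {v : BSeq X o // Quot.mk _ v = η}),
    liminf (fun i => ((gp o (u.1.1 i) (v.1.1 i) : ℝ) : EReal)) atTop

/-- The extended Gromov product of a boundary point and a point of `X`,
`(ξ|x)_o = sup { liminf (uᵢ|x)_o : u ∈ ξ }`.  Convergence `xₙ → ξ` in the
Gromov bordification means `(ξ|xₙ)_o → +∞`. -/
noncomputable def gpXB (o : X) (ξ : GromovBoundary X o) (x : X) : EReal :=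
  ⨆ (u : {u : BSeq X o // Quot.mk _ u = ξ}),
    liminf (fun i => ((gp o (u.1.1 i) x : ℝ) : EReal)) atTop

theorem gp_comm (o x y : X) : gp o x y = gp o y x := by
  unfold gp; rw [dist_comm x y]; ring

theorem gp_self (o x : X) : gp o x x = dist x o := by
  unfold gp; simp

theorem gp_add_eq (p o' x : X) : gp p x o' + gp o' x p = dist o' p := by
  unfold gp; rw [dist_comm p o']; ring

theorem conv_base {o : X} (u : BSeq X o) (o' : X) :
    Tendsto (fun q : ℕ × ℕ => gp o' (u.1 q.1) (u.1 q.2)) atTop atTop := by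
  have hu : Tendsto (fun q : ℕ × ℕ => gp o (u.1 q.1) (u.1 q.2)) atTop atTop := u.2
  refine tendsto_atTop_mono' _ ?_ (tendsto_atTop_add_const_right _ (-(dist o o')) hu)
  filter_upwards with q
  have := gp_basechange o o' (u.1 q.1) (u.1 q.2)
  simpa [sub_eq_add_neg] using this

theorem bRel_refl (o : X) (u : BSeq X o) : bRel o u u := by
  have h2 : Tendsto (fun i : ℕ => (i, i)) atTop (atTop : Filter (ℕ × ℕ)) := by
    rw [← prod_atTop_atTop_eq]; exact tendsto_id.prodMk tendsto_id
  have hu : Tendsto (fun q : ℕ × ℕ => gp o (u.1 q.1) (u.1 q.2)) atTop atTop := u.2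
  have h3 := hu.comp h2
  exact h3

theorem bRel_symm {o : X} {u v : BSeq X o} (h : bRel o u v) : bRel o v u := by
  have he : (fun i => gp o (v.1 i) (u.1 i)) = fun i => gp o (u.1 i) (v.1 i) :=
    funext fun i => gp_comm o (v.1 i) (u.1 i)
  show Tendsto (fun i => gp o (v.1 i) (u.1 i)) atTop atTop
  rw [he]; exact h

theorem bRel_trans {δ : ℝ} (hhyp : IsGromovHyperbolicWith X δ) {o : X} {u v w : BSeq X o}
    (h1 : bRel o u v) (h2 : bRel o v w) : bRel o u w := by
  show Tendsto (fun i => gp o (u.1 i) (w.1 i)) atTop atTop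
  have hmin : Tendsto (fun i => min (gp o (u.1 i) (v.1 i)) (gp o (v.1 i) (w.1 i)))
      atTop atTop := by
    refine tendsto_atTop.mpr fun b => ?_
    filter_upwards [tendsto_atTop.mp h1 b, tendsto_atTop.mp h2 b] with i hi1 hi2
    exact le_min hi1 hi2
  refine tendsto_atTop_mono' _ ?_ (tendsto_atTop_add_const_right _ (-δ) hmin)
  filter_upwards with i
  have := hhyp o (u.1 i) (w.1 i) (v.1 i)
  simpa [sub_eq_add_neg] using this

theorem bRel_equivalence {δ : ℝ} (hhyp : IsGromovHyperbolicWith X δ) (o : X) :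
    Equivalence (bRel (X := X) o) :=
  ⟨bRel_refl o, bRel_symm, fun ha hb => bRel_trans hhyp ha hb⟩

theorem mk_eq_mk_iff {δ : ℝ} (hhyp : IsGromovHyperbolicWith X δ) {o : X} {u v : BSeq X o} :
    Quot.mk (bRel o) u = Quot.mk (bRel o) v ↔ bRel o u v := by
  rw [Quot.eq]
  exact (bRel_equivalence hhyp o).eqvGen_iff

/-- Main per-`n` step. -/
theorem key_step {δ C R T : ℝ} (hδ : 0 ≤ δ) (hC : 0 ≤ C)
    (hhyp : IsGromovHyperbolicWith X δ) {o o' : X} (e : X ≃ᵢ X)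
    {ξ : GromovBoundary X o}
    (uj : BSeq X o) (w : {u : BSeq X o // Quot.mk (bRel o) u = ξ})
    (hA : ∀ᶠ i in atTop, R - δ ≤ gp o (w.1.1 i) (e (uj.1 i)))
    (hfreq : ∃ᶠ i in atTop, gp o' (uj.1 i) (e.symm o) ≤ C + δ)
    (hD : R - 3*δ - C ≤ dist o' (e.symm o))
    (hT : T + 6*δ + 2*C + 1 ≤ R) :
    (T : EReal) < gpXB o ξ (e o') := by
  set p := e.symm o with hp
  -- upgrade the frequent bound to an eventual bound
  obtain ⟨a, ha⟩ := eventually_atTop.mp (tendsto_atTop.mp (conv_base uj o') (C + 3*δ + 1))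
  obtain ⟨k, hk, hk2⟩ := frequently_atTop.mp hfreq (max a.1 a.2)
  have hEvt : ∀ᶠ i in atTop, gp o' (uj.1 i) p ≤ C + 2*δ := by
    filter_upwards [eventually_ge_atTop (max a.1 a.2)] with i hi
    have hjoint : C + 3*δ + 1 ≤ gp o' (uj.1 k) (uj.1 i) :=
      ha (k, i) ⟨le_trans (le_max_left a.1 a.2) hk, le_trans (le_max_right a.1 a.2) hi⟩
    have hh := hhyp o' (uj.1 k) p (uj.1 i)
    by_contra hcon
    push_neg at hcon
    have hlt : C + 2*δ < min (gp o' (uj.1 k) (uj.1 i)) (gp o' (uj.1 i) p) :=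
      lt_min (by linarith) hcon
    linarith
  have hFinal : ∀ᶠ i in atTop, R - 6*δ - 2*C ≤ gp o (w.1.1 i) (e o') := by
    filter_upwards [hA, hEvt] with i h1 h2
    have hiso := gp_isom e o (uj.1 i) o'
    have hadd := gp_add_eq p o' (uj.1 i)
    have hh := hhyp o (w.1.1 i) (e o') (e (uj.1 i))
    have hmin : R - 5*δ - 2*C ≤
        min (gp o (w.1.1 i) (e (uj.1 i))) (gp o (e (uj.1 i)) (e o')) :=
      le_min (by linarith) (by rw [hiso]; linarith)
    linarith
  have hle : ((R - 6*δ - 2*C : ℝ) : EReal) ≤ gpXB o ξ (e o') := by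
    refine le_trans ?_ (le_iSup _ w)
    refine le_liminf_of_le (by isBoundedDefault) ?_
    exact hFinal.mono fun i hi => by exact_mod_cast hi
  calc (T : EReal) < ((T + 1 : ℝ) : EReal) := by exact_mod_cast lt_add_one T
    _ ≤ ((R - 6*δ - 2*C : ℝ) : EReal) := by exact_mod_cast (by linarith : T + 1 ≤ R - 6*δ - 2*C)
    _ ≤ _ := hle

/-- **Contraction of two boundary points forces convergence of orbits**
(Proposition `prop contraction shadow` of the paper). -/
theorem orbit_convergence_of_two_boundary_points
    (δ α : ℝ) (hδ : 0 ≤ δ) (hα : 0 ≤ α) [TopologicalSpace.SeparableSpace X]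
    (hhyp : IsGromovHyperbolicWith X δ) (hgeo : IsAlmostGeodesicWith X α)
    (g : ℕ → X ≃ᵢ X) (o : X) (ξ ξ₁ ξ₂ : GromovBoundary X o) (hne : ξ₁ ≠ ξ₂)
    (h1 : Tendsto (fun n => gpBB o ξ (bmap (g n) o ξ₁)) atTop (nhds (⊤ : EReal)))
    (h2 : Tendsto (fun n => gpBB o ξ (bmap (g n) o ξ₂)) atTop (nhds (⊤ : EReal))) :
    ∀ o' : X, Tendsto (fun n => gpXB o ξ (g n o')) atTop (nhds (⊤ : EReal)) := by
  intro o'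
  obtain ⟨u₁, hu₁⟩ := Quot.exists_rep ξ₁
  obtain ⟨u₂, hu₂⟩ := Quot.exists_rep ξ₂
  have hnrel : ¬ bRel o u₁ u₂ := by
    intro h
    exact hne (hu₁ ▸ hu₂ ▸ Quot.sound h)
  obtain ⟨C₀, hC₀⟩ : ∃ C₀ : ℝ, ∃ᶠ i in atTop, gp o (u₁.1 i) (u₂.1 i) < C₀ := by
    by_contra h
    push_neg at h
    exact hnrel (tendsto_atTop.mpr fun b => h b)
  set C : ℝ := max (C₀ + dist o' o) 0 with hCdef
  have hC : 0 ≤ C := le_max_right _ _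
  have hF : ∃ᶠ i in atTop, gp o' (u₁.1 i) (u₂.1 i) ≤ C := by
    refine hC₀.mono fun i hi => ?_
    have := gp_basechange o' o (u₁.1 i) (u₂.1 i)
    have : gp o' (u₁.1 i) (u₂.1 i) ≤ C₀ + dist o' o := by linarith
    exact this.trans (le_max_left _ _)
  rw [EReal.tendsto_nhds_top_iff_real]
  intro T
  set R : ℝ := T + 6*δ + 2*C + 1 with hRdef
  filter_upwards [EReal.tendsto_nhds_top_iff_real.mp h1 R,
    EReal.tendsto_nhds_top_iff_real.mp h2 R] with n hn1 hn2
  -- extract representatives realizing the large Gromov products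
  rw [gpBB, lt_iSup_iff] at hn1 hn2
  obtain ⟨w₁, hn1⟩ := hn1
  obtain ⟨w₂, hn2⟩ := hn2
  rw [lt_iSup_iff] at hn1 hn2
  obtain ⟨v₁, hn1⟩ := hn1
  obtain ⟨v₂, hn2⟩ := hn2
  have hEv1 : ∀ᶠ i in atTop, R < gp o (w₁.1.1 i) (v₁.1.1 i) :=
    (eventually_lt_of_lt_liminf hn1).mono fun i hi => by exact_mod_cast hi
  have hEv2 : ∀ᶠ i in atTop, R < gp o (w₂.1.1 i) (v₂.1.1 i) :=
    (eventually_lt_of_lt_liminf hn2).mono fun i hi => by exact_mod_cast hi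
  -- the image sequences
  set gu₁ : BSeq X o := ⟨fun i => g n (u₁.1 i), u₁.2.isom (g n)⟩ with hgu₁
  set gu₂ : BSeq X o := ⟨fun i => g n (u₂.1 i), u₂.2.isom (g n)⟩ with hgu₂
  have hbm₁ : bmap (g n) o ξ₁ = Quot.mk (bRel o) gu₁ := by rw [← hu₁]; rfl
  have hbm₂ : bmap (g n) o ξ₂ = Quot.mk (bRel o) gu₂ := by rw [← hu₂]; rfl
  have htr1 : bRel o v₁.1 gu₁ := (mk_eq_mk_iff hhyp).mp (v₁.2.trans hbm₁)
  have htr2 : bRel o v₂.1 gu₂ := (mk_eq_mk_iff hhyp).mp (v₂.2.trans hbm₂)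
  have hA1 : ∀ᶠ i in atTop, R - δ ≤ gp o (w₁.1.1 i) (g n (u₁.1 i)) := by
    filter_upwards [hEv1, tendsto_atTop.mp htr1 R] with i hi hi'
    have hh := hhyp o (w₁.1.1 i) (g n (u₁.1 i)) (v₁.1.1 i)
    have hmin : R ≤ min (gp o (w₁.1.1 i) (v₁.1.1 i)) (gp o (v₁.1.1 i) (g n (u₁.1 i))) :=
      le_min hi.le hi'
    linarith
  have hA2 : ∀ᶠ i in atTop, R - δ ≤ gp o (w₂.1.1 i) (g n (u₂.1 i)) := by
    filter_upwards [hEv2, tendsto_atTop.mp htr2 R] with i hi hi'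
    have hh := hhyp o (w₂.1.1 i) (g n (u₂.1 i)) (v₂.1.1 i)
    have hmin : R ≤ min (gp o (w₂.1.1 i) (v₂.1.1 i)) (gp o (v₂.1.1 i) (g n (u₂.1 i))) :=
      le_min hi.le hi'
    linarith
  have hww : bRel o w₁.1 w₂.1 := (mk_eq_mk_iff hhyp).mp (w₁.2.trans w₂.2.symm)
  have hB : ∀ᶠ i in atTop, R - 3*δ ≤ gp o (g n (u₁.1 i)) (g n (u₂.1 i)) := by
    filter_upwards [hA1, hA2, tendsto_atTop.mp hww R] with i a1 a2 aw
    have h2' := hhyp o (w₁.1.1 i) (g n (u₂.1 i)) (w₂.1.1 i)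
    have s2 : R - 2*δ ≤ gp o (w₁.1.1 i) (g n (u₂.1 i)) := by
      have hmin : R - δ ≤ min (gp o (w₁.1.1 i) (w₂.1.1 i)) (gp o (w₂.1.1 i) (g n (u₂.1 i))) :=
        le_min (by linarith) a2
      linarith
    have h1' := hhyp o (g n (u₁.1 i)) (g n (u₂.1 i)) (w₁.1.1 i)
    have e1 : gp o (g n (u₁.1 i)) (w₁.1.1 i) = gp o (w₁.1.1 i) (g n (u₁.1 i)) :=
      gp_comm o _ _
    have hmin2 : R - 2*δ ≤
        min (gp o (g n (u₁.1 i)) (w₁.1.1 i)) (gp o (w₁.1.1 i) (g n (u₂.1 i))) :=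
      le_min (by rw [e1]; linarith) s2
    linarith
  have hD : R - 3*δ - C ≤ dist o' ((g n).symm o) := by
    obtain ⟨i, hFi, hBi⟩ := (hF.and_eventually hB).exists
    have hiso := gp_isom (g n) o (u₁.1 i) (u₂.1 i)
    have hbase := gp_basechange ((g n).symm o) o' (u₁.1 i) (u₂.1 i)
    have hdc : dist ((g n).symm o) o' = dist o' ((g n).symm o) := dist_comm _ _
    linarith [hiso ▸ hBi]
  have hFreqMin : ∃ᶠ i in atTop,
      gp o' (u₁.1 i) ((g n).symm o) ≤ C + δ ∨ gp o' (u₂.1 i) ((g n).symm o) ≤ C + δ := by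
    refine hF.mono fun i hi => ?_
    have hh := hhyp o' (u₁.1 i) (u₂.1 i) ((g n).symm o)
    have e2 : gp o' ((g n).symm o) (u₂.1 i) = gp o' (u₂.1 i) ((g n).symm o) :=
      gp_comm o' _ _
    rw [← min_le_iff]
    have : min (gp o' (u₁.1 i) ((g n).symm o)) (gp o' ((g n).symm o) (u₂.1 i)) ≤ C + δ := by
      linarith
    rw [e2] at this
    exact this
  have hT : T + 6*δ + 2*C + 1 ≤ R := le_of_eq hRdef.symm
  rcases frequently_or_distrib.mp hFreqMin with hfreq | hfreq
  · exact key_step hδ hC hhyp (g n) u₁ w₁ hA1 hfreq hD hT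
  · exact key_step hδ hC hhyp (g n) u₂ w₂ hA2 hfreq hD hT

end Stmt19
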